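/- Let s = b + c(p−1) and r = s + p^t(p−1)d with t ≥ 2, d ≥ 1, 2 ≤ b ≤ p, 0 ≤ c ≤ p−1, 0 ≤ m < p−1, s ≥ m, and let l be an integer with 0 ≤ l ≤ m. Assume further 0 ≤ b−m+p−1 ≤ c, and set c_0 = p^{2m−b−(p−1)} · C(r−l, b−m+p−1) / C(r−l, r−m) (a rational number). Then: (1) ν_p( C(r−l, b−m+p−1) ) equals 0 if 0 ≤ l ≤ m−c+1, equals 1 if m−c+2 ≤ l ≤ b−c+p, and equals 0 if b−c+p+1 ≤ l ≤ b−c+2p; and (2) ν_p(c_0) equals: 2m−b−(p−1) if b−c+p−1 ≤ m ≤ b−c+p and 0 ≤ l ≤ m−c+1; 2m−b−(p−1)−1 if b−c+p+1 ≤ m ≤ b−c+2p and 0 ≤ l ≤ m−c+1; 2m−b−(p−1)+1 if b−c+p−1 ≤ m ≤ b−c+p and m−c+2 ≤ l ≤ b−c+p; 2m−b−(p−1) if b−c+p+1 ≤ m ≤ b−c+2p and m−c+2 ≤ l ≤ b−c+p; 2m−b−(p−1) if b−c+p+1 ≤ m ≤ b−c+2p and b−c+p+1 ≤ l ≤ b−c+2p.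 -/

import Mathlib

/-- Binomial coefficient of integers with the convention `iC n k = 0` when `k < 0` or `k > n`. -/
def iC (n k : ℤ) : ℤ := if 0 ≤ k ∧ k ≤ n then (n.toNat.choose k.toNat : ℤ) else 0


/-- If `n = d0 + W` with `p ∣ W`, `d0 < p` and `k ≤ d0`, then `p ∤ C(n,k)`. -/
lemma choose_val_zero_aux {p n k d0 W : ℕ} (hp : p.Prime)
    (hn : n = d0 + W) (hd0 : d0 < p) (hW : p ∣ W) (hk : k ≤ d0) :
    ¬ p ∣ n.choose k := by
  intro hdvd
  have h1 : p ∣ n.descFactorial k := by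
    rw [Nat.descFactorial_eq_factorial_mul_choose]
    exact hdvd.mul_left _
  rw [Nat.descFactorial_eq_prod_range] at h1
  obtain ⟨i, hi, hpi⟩ := hp.prime.exists_mem_finset_dvd h1
  have hik : i < k := Finset.mem_range.mp hi
  have h2 : p ∣ (n - i) - W := Nat.dvd_sub hpi hW
  have h3 : (n - i) - W = d0 - i := by omega
  rw [h3] at h2
  have h4 := Nat.le_of_dvd (by omega) h2
  omega

/-- If `n = d0 + W` with `p ∣ W`, `p^2 ∤ W`, `d0 < k < p`, then `ν_p(C(n,k)) = 1`. -/
lemma choose_val_one_aux {p n k d0 W : ℕ} (hp : p.Prime)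
    (hn : n = d0 + W) (hd0 : d0 < p) (hW : p ∣ W) (hW2 : ¬ p ^ 2 ∣ W)
    (hdk : d0 < k) (hkp : k < p) :
    p ∣ n.choose k ∧ ¬ p ^ 2 ∣ n.choose k := by
  have hW0 : W ≠ 0 := by rintro rfl; exact hW2 (dvd_zero _)
  have hWp : p ≤ W := Nat.le_of_dvd (Nat.pos_of_ne_zero hW0) hW
  have hkn : k ≤ n := by omega
  have hd0k : d0 ∈ Finset.range k := Finset.mem_range.mpr hdk
  obtain ⟨u, hu⟩ := id hW
  have hu2 : ¬ p ∣ u := by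
    intro h; exact hW2 (by rw [hu, pow_two]; exact mul_dvd_mul_left p h)
  set Q := ∏ i ∈ (Finset.range k).erase d0, (n - i) with hQ
  have hQnd : ¬ p ∣ Q := by
    intro h
    obtain ⟨i, hi, hpi⟩ := hp.prime.exists_mem_finset_dvd h
    have hik : i < k := Finset.mem_range.mp (Finset.mem_of_mem_erase hi)
    have hine : i ≠ d0 := Finset.ne_of_mem_erase hi
    rcases lt_or_gt_of_ne hine with hlt | hgt
    · have h2 : p ∣ (n - i) - W := Nat.dvd_sub hpi hW
      have h3 : (n - i) - W = d0 - i := by omega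
      rw [h3] at h2
      have := Nat.le_of_dvd (by omega) h2
      omega
    · have h2 : p ∣ W - (n - i) := Nat.dvd_sub hW hpi
      have h3 : W - (n - i) = i - d0 := by omega
      rw [h3] at h2
      have := Nat.le_of_dvd (by omega) h2
      omega
  have hdesc : n.descFactorial k = W * Q := by
    rw [Nat.descFactorial_eq_prod_range, ← Finset.mul_prod_erase _ _ hd0k]
    congr 1
    omega
  have hfac : Nat.factorial k * n.choose k = p * (u * Q) := by
    rw [← Nat.descFactorial_eq_factorial_mul_choose, hdesc, hu, mul_assoc]
  have hfk : ¬ p ∣ Nat.factorial k := by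
    rw [Nat.Prime.dvd_factorial hp]
    omega
  constructor
  · have h5 : p ∣ Nat.factorial k * n.choose k := hfac ▸ dvd_mul_right p _
    exact (hp.dvd_mul.mp h5).resolve_left hfk
  · intro h
    have h6 : p ^ 2 ∣ p * (u * Q) := hfac ▸ Dvd.dvd.mul_left h (Nat.factorial k)
    have h7 : p ∣ u * Q := by
      rw [pow_two] at h6
      exact (mul_dvd_mul_iff_left hp.pos.ne').mp h6
    rcases hp.dvd_mul.mp h7 with h | h
    · exact hu2 h
    · exact hQnd h

lemma iC_val_zero {p : ℕ} (hp : p.Prime) {n k D0 W : ℤ}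
    (hn : n = D0 + W) (hD00 : 0 ≤ D0) (hD0p : D0 < (p : ℤ))
    (hW : (p : ℤ) ∣ W) (hW0 : 0 ≤ W) (hk0 : 0 ≤ k) (hkD : k ≤ D0) :
    padicValInt p (iC n k) = 0 ∧ iC n k ≠ 0 := by
  have hn0 : 0 ≤ n := by omega
  have hkn : k ≤ n := by omega
  have hNat : n.toNat = D0.toNat + W.toNat := by omega
  have hd0p : D0.toNat < p := by omega
  have hkd : k.toNat ≤ D0.toNat := by omega
  have hWnat : p ∣ W.toNat := by
    obtain ⟨x, hx⟩ := hW
    have hx0 : 0 ≤ x := by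
      by_contra h
      have : (p : ℤ) * x < 0 := mul_neg_of_pos_of_neg (by exact_mod_cast hp.pos) (by omega)
      omega
    refine ⟨x.toNat, ?_⟩
    have : (W.toNat : ℤ) = ((p * x.toNat : ℕ) : ℤ) := by
      push_cast [Int.toNat_of_nonneg hW0, Int.toNat_of_nonneg hx0]
      linarith
    exact_mod_cast this
  have hnd := choose_val_zero_aux hp hNat hd0p hWnat hkd
  have hIC : iC n k = (n.toNat.choose k.toNat : ℤ) := if_pos ⟨hk0, hkn⟩
  constructor
  · rw [hIC, padicValInt.of_nat]
    exact padicValNat.eq_zero_of_not_dvd hnd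
  · rw [hIC]
    have : 0 < n.toNat.choose k.toNat := Nat.choose_pos (by omega)
    exact_mod_cast this.ne'

lemma iC_val_one {p : ℕ} (hp : p.Prime) {n k D0 W : ℤ}
    (hn : n = D0 + W) (hD00 : 0 ≤ D0) (hD0p : D0 < (p : ℤ))
    (hW : (p : ℤ) ∣ W) (hW2 : ¬ (p : ℤ) ^ 2 ∣ W) (hW0 : 0 ≤ W)
    (hDk : D0 < k) (hkp : k < (p : ℤ)) :
    padicValInt p (iC n k) = 1 ∧ iC n k ≠ 0 := by
  haveI := Fact.mk hp
  have hWne : W ≠ 0 := by rintro rfl; exact hW2 (dvd_zero _)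
  have hWp : (p : ℤ) ≤ W := Int.le_of_dvd (by omega) hW
  have hn0 : 0 ≤ n := by omega
  have hkn : k ≤ n := by omega
  have hk0 : 0 ≤ k := by omega
  have hNat : n.toNat = D0.toNat + W.toNat := by omega
  have hd0p : D0.toNat < p := by omega
  have hdk : D0.toNat < k.toNat := by omega
  have hkpn : k.toNat < p := by omega
  have hWcast : ((W.toNat : ℤ)) = W := Int.toNat_of_nonneg hW0
  have hWnat : p ∣ W.toNat := by
    rw [← Int.natCast_dvd_natCast, hWcast]; exact hW
  have hWnat2 : ¬ p ^ 2 ∣ W.toNat := by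
    intro h
    apply hW2
    have := Int.natCast_dvd_natCast.mpr h
    push_cast at this
    rwa [hWcast] at this
  obtain ⟨hdvd, hnot⟩ := choose_val_one_aux hp hNat hd0p hWnat hWnat2 hdk hkpn
  have hIC : iC n k = (n.toNat.choose k.toNat : ℤ) := if_pos ⟨hk0, hkn⟩
  have hC0 : n.toNat.choose k.toNat ≠ 0 := (Nat.choose_pos (by omega)).ne'
  constructor
  · rw [hIC, padicValInt.of_nat]
    have h1 : 1 ≤ padicValNat p (n.toNat.choose k.toNat) := by
      rw [← padicValNat_dvd_iff_le hC0]; simpa using hdvd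
    have h2 : ¬ 2 ≤ padicValNat p (n.toNat.choose k.toNat) := by
      rw [← padicValNat_dvd_iff_le hC0]; exact hnot
    omega
  · rw [hIC]; exact_mod_cast hC0

lemma iC_symm {n k : ℤ} (hk0 : 0 ≤ k) (hkn : k ≤ n) : iC n (n - k) = iC n k := by
  have h1 : 0 ≤ n - k := by omega
  have h2 : n - k ≤ n := by omega
  rw [iC, iC, if_pos ⟨h1, h2⟩, if_pos ⟨hk0, hkn⟩]
  have h3 : (n - k).toNat = n.toNat - k.toNat := by omega
  rw [h3, Nat.choose_symm (by omega)]

lemma val_self_zpow' {p : ℕ} (hp : p.Prime) (e : ℤ) :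
    padicValRat p ((p : ℚ) ^ e) = e := by
  haveI := Fact.mk hp
  have hq : (p : ℚ) ≠ 0 := Nat.cast_ne_zero.mpr hp.ne_zero
  rcases le_or_gt 0 e with h | h
  · obtain ⟨n, rfl⟩ : ∃ n : ℕ, e = (n : ℤ) := ⟨e.toNat, by omega⟩
    rw [zpow_natCast, padicValRat.pow (q := _), padicValRat.self hp.one_lt, mul_one]
  · obtain ⟨n, rfl⟩ : ∃ n : ℕ, e = -(n : ℤ) := ⟨(-e).toNat, by omega⟩
    rw [zpow_neg, zpow_natCast, padicValRat.inv, padicValRat.pow (q := _),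
      padicValRat.self hp.one_lt, mul_one]


/-- **Lemma 3.6 (B).** Let `p` be an odd prime, `s = b + c(p−1)`, `r = s + p^t(p−1)d` with
`t ≥ 2`, `d ≥ 1`, `2 ≤ b ≤ p`, `0 ≤ c ≤ p−1`, `0 ≤ m < p−1`, `s ≥ m`, `0 ≤ l ≤ m`, and
`0 ≤ b−m+p−1 ≤ c`. Set `c₀ = p^{2m−b−(p−1)}·C(r−l, b−m+p−1)/C(r−l, r−m) ∈ ℚ`. Then
`ν_p(C(r−l, b−m+p−1))` equals `0`, `1`, `0` on the listed ranges of `l`, and `ν_p(c₀)`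
takes the stated values in the five listed cases. -/
theorem stmt_14 (p : ℕ) (hp : p.Prime) (hodd : Odd p)
    (b c m l s r : ℤ) (t d : ℕ)
    (ht : 2 ≤ t) (hd : 1 ≤ d)
    (hb2 : 2 ≤ b) (hbp : b ≤ (p : ℤ)) (hc0 : 0 ≤ c) (hcp : c ≤ (p : ℤ) - 1)
    (hm0 : 0 ≤ m) (hmp : m < (p : ℤ) - 1)
    (hs : s = b + c * ((p : ℤ) - 1))
    (hr : r = s + (p : ℤ) ^ t * ((p : ℤ) - 1) * (d : ℤ))
    (hms : m ≤ s) (hl0 : 0 ≤ l) (hlm : l ≤ m)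
    (hbm0 : 0 ≤ b - m + (p : ℤ) - 1) (hbmc : b - m + (p : ℤ) - 1 ≤ c)
    (c₀ : ℚ)
    (hc₀ : c₀ = (p : ℚ) ^ (2 * m - b - ((p : ℤ) - 1)) *
      (iC (r - l) (b - m + (p : ℤ) - 1) : ℚ) / (iC (r - l) (r - m) : ℚ)) :
    ((0 ≤ l ∧ l ≤ m - c + 1) → padicValInt p (iC (r - l) (b - m + (p : ℤ) - 1)) = 0) ∧
    ((m - c + 2 ≤ l ∧ l ≤ b - c + p) → padicValInt p (iC (r - l) (b - m + (p : ℤ) - 1)) = 1) ∧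
    ((b - c + p + 1 ≤ l ∧ l ≤ b - c + 2 * p) →
      padicValInt p (iC (r - l) (b - m + (p : ℤ) - 1)) = 0) ∧
    ((b - c + p - 1 ≤ m ∧ m ≤ b - c + p ∧ 0 ≤ l ∧ l ≤ m - c + 1) →
      padicValRat p c₀ = 2 * m - b - ((p : ℤ) - 1)) ∧
    ((b - c + p + 1 ≤ m ∧ m ≤ b - c + 2 * p ∧ 0 ≤ l ∧ l ≤ m - c + 1) →
      padicValRat p c₀ = 2 * m - b - ((p : ℤ) - 1) - 1) ∧
    ((b - c + p - 1 ≤ m ∧ m ≤ b - c + p ∧ m - c + 2 ≤ l ∧ l ≤ b - c + p) →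
      padicValRat p c₀ = 2 * m - b - ((p : ℤ) - 1) + 1) ∧
    ((b - c + p + 1 ≤ m ∧ m ≤ b - c + 2 * p ∧ m - c + 2 ≤ l ∧ l ≤ b - c + p) →
      padicValRat p c₀ = 2 * m - b - ((p : ℤ) - 1)) ∧
    ((b - c + p + 1 ≤ m ∧ m ≤ b - c + 2 * p ∧ b - c + p + 1 ≤ l ∧ l ≤ b - c + 2 * p) →
      padicValRat p c₀ = 2 * m - b - ((p : ℤ) - 1)) := by
  haveI := Fact.mk hp
  have hp2 : (2 : ℤ) ≤ (p : ℤ) := by exact_mod_cast hp.two_le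
  have hpne : (p : ℤ) ≠ 0 := by positivity
  have hcb : b + 1 ≤ c := by linarith
  have hbm : b ≤ m := by linarith
  have hpt1 : (p : ℤ) ^ t = (p : ℤ) * (p : ℤ) ^ (t - 1) := by
    conv_lhs => rw [show t = (t - 1) + 1 by omega]
    rw [pow_succ']
  have hpt2 : (p : ℤ) ^ (t - 1) = (p : ℤ) * (p : ℤ) ^ (t - 2) := by
    conv_lhs => rw [show t - 1 = (t - 2) + 1 by omega]
    rw [pow_succ']
  have hE0 : 0 ≤ (p : ℤ) ^ (t - 1) * ((p : ℤ) - 1) * (d : ℤ) := by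
    apply mul_nonneg (mul_nonneg (by positivity) (by linarith)) (by positivity)
  -- subcase A decomposition : r - l = D0A + p * MA
  have hWA : r - l = ((p : ℤ) + b - c - l) +
      (p : ℤ) * ((c - 1) + (p : ℤ) ^ (t - 1) * ((p : ℤ) - 1) * (d : ℤ)) := by
    rw [hr, hs, hpt1]; ring
  have hMA0 : (0 : ℤ) ≤ (c - 1) + (p : ℤ) ^ (t - 1) * ((p : ℤ) - 1) * (d : ℤ) := by linarith
  have hMAnd : ¬ (p : ℤ) ∣ ((c - 1) + (p : ℤ) ^ (t - 1) * ((p : ℤ) - 1) * (d : ℤ)) := by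
    intro hdvd
    have h3 : (c - 1) + (p : ℤ) ^ (t - 1) * ((p : ℤ) - 1) * (d : ℤ) -
        (p : ℤ) * ((p : ℤ) ^ (t - 2) * ((p : ℤ) - 1) * (d : ℤ)) = c - 1 := by
      rw [hpt2]; ring
    have h4 : (p : ℤ) ∣ c - 1 := by
      rw [← h3]; exact dvd_sub hdvd (dvd_mul_right _ _)
    have h5 := Int.le_of_dvd (by linarith) h4
    linarith
  have hWAdvd : (p : ℤ) ∣ (p : ℤ) * ((c - 1) + (p : ℤ) ^ (t - 1) * ((p : ℤ) - 1) * (d : ℤ)) :=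
    dvd_mul_right _ _
  have hWA0 : (0 : ℤ) ≤ (p : ℤ) * ((c - 1) + (p : ℤ) ^ (t - 1) * ((p : ℤ) - 1) * (d : ℤ)) :=
    mul_nonneg (by linarith) hMA0
  have hWA2 : ¬ (p : ℤ) ^ 2 ∣ (p : ℤ) * ((c - 1) + (p : ℤ) ^ (t - 1) * ((p : ℤ) - 1) * (d : ℤ)) := by
    intro hdvd
    apply hMAnd
    rw [pow_two] at hdvd
    exact (mul_dvd_mul_iff_left hpne).mp hdvd
  -- subcase B decomposition : r - l = D0B + p * MB
  have hWB : r - l = (2 * (p : ℤ) + b - c - l) +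
      (p : ℤ) * ((c - 2) + (p : ℤ) ^ (t - 1) * ((p : ℤ) - 1) * (d : ℤ)) := by
    rw [hr, hs, hpt1]; ring
  have hWB0 : (0 : ℤ) ≤ (p : ℤ) * ((c - 2) + (p : ℤ) ^ (t - 1) * ((p : ℤ) - 1) * (d : ℤ)) :=
    mul_nonneg (by linarith) (by linarith)
  have hWBdvd : (p : ℤ) ∣ (p : ℤ) * ((c - 2) + (p : ℤ) ^ (t - 1) * ((p : ℤ) - 1) * (d : ℤ)) :=
    dvd_mul_right _ _
  -- numerator valuations
  have numA0 : l ≤ m - c + 1 →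
      padicValInt p (iC (r - l) (b - m + (p : ℤ) - 1)) = 0 ∧
        iC (r - l) (b - m + (p : ℤ) - 1) ≠ 0 := fun h =>
    iC_val_zero hp hWA (by linarith) (by linarith) hWAdvd hWA0 hbm0 (by linarith)
  have numA1 : m - c + 2 ≤ l → l ≤ b - c + p →
      padicValInt p (iC (r - l) (b - m + (p : ℤ) - 1)) = 1 ∧
        iC (r - l) (b - m + (p : ℤ) - 1) ≠ 0 := fun h1 h2 =>
    iC_val_one hp hWA (by linarith) (by linarith) hWAdvd hWA2 hWA0 (by linarith) (by linarith)
  have numB0 : b - c + p + 1 ≤ l →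
      padicValInt p (iC (r - l) (b - m + (p : ℤ) - 1)) = 0 ∧
        iC (r - l) (b - m + (p : ℤ) - 1) ≠ 0 := fun h =>
    iC_val_zero hp hWB (by linarith) (by linarith) hWBdvd hWB0 hbm0 (by linarith)
  -- denominator rewrite via symmetry
  have hrm0 : 0 ≤ (p : ℤ) ^ t * ((p : ℤ) - 1) * (d : ℤ) := by
    apply mul_nonneg (mul_nonneg (by positivity) (by linarith)) (by positivity)
  have hml : iC (r - l) (r - m) = iC (r - l) (m - l) := by
    have h := iC_symm (show (0 : ℤ) ≤ m - l by linarith)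
      (show m - l ≤ r - l by rw [hr]; linarith)
    rw [show r - l - (m - l) = r - m by ring] at h
    exact h
  have denA0 : l ≤ b - c + p → m ≤ b - c + p →
      padicValInt p (iC (r - l) (r - m)) = 0 ∧ iC (r - l) (r - m) ≠ 0 := by
    intro h1 h2
    rw [hml]
    exact iC_val_zero hp hWA (by linarith) (by linarith) hWAdvd hWA0
      (by linarith) (by linarith)
  have denA1 : l ≤ b - c + p → b - c + p + 1 ≤ m →
      padicValInt p (iC (r - l) (r - m)) = 1 ∧ iC (r - l) (r - m) ≠ 0 := by
    intro h1 h2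
    rw [hml]
    exact iC_val_one hp hWA (by linarith) (by linarith) hWAdvd hWA2 hWA0
      (by linarith) (by linarith)
  have denB0 : b - c + p + 1 ≤ l →
      padicValInt p (iC (r - l) (r - m)) = 0 ∧ iC (r - l) (r - m) ≠ 0 := by
    intro h1
    rw [hml]
    exact iC_val_zero hp hWB (by linarith) (by linarith) hWBdvd hWB0
      (by linarith) (by linarith)
  -- valuation of c₀
  have key : ∀ vA vB : ℕ,
      padicValInt p (iC (r - l) (b - m + (p : ℤ) - 1)) = vA →
      iC (r - l) (b - m + (p : ℤ) - 1) ≠ 0 →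
      padicValInt p (iC (r - l) (r - m)) = vB →
      iC (r - l) (r - m) ≠ 0 →
      padicValRat p c₀ = (2 * m - b - ((p : ℤ) - 1)) + vA - vB := by
    intro vA vB hA hA0 hB hB0
    have hq : (p : ℚ) ≠ 0 := Nat.cast_ne_zero.mpr hp.ne_zero
    have hA0' : (iC (r - l) (b - m + (p : ℤ) - 1) : ℚ) ≠ 0 := Int.cast_ne_zero.mpr hA0
    have hB0' : (iC (r - l) (r - m) : ℚ) ≠ 0 := Int.cast_ne_zero.mpr hB0
    rw [hc₀, mul_div_assoc,
      padicValRat.mul (zpow_ne_zero _ hq) (div_ne_zero hA0' hB0'),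
      padicValRat.div hA0' hB0', val_self_zpow' hp,
      padicValRat.of_int, padicValRat.of_int, hA, hB]
    ring
  refine ⟨fun ⟨h1, h2⟩ => (numA0 h2).1, fun ⟨h1, h2⟩ => (numA1 h1 h2).1,
    fun ⟨h1, h2⟩ => (numB0 h1).1, ?_, ?_, ?_, ?_, ?_⟩
  · rintro ⟨h1, h2, h3, h4⟩
    obtain ⟨hA, hA0⟩ := numA0 h4
    obtain ⟨hB, hB0⟩ := denA0 (by linarith) h2
    rw [key 0 0 hA hA0 hB hB0]; push_cast; ring
  · rintro ⟨h1, h2, h3, h4⟩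
    obtain ⟨hA, hA0⟩ := numA0 h4
    obtain ⟨hB, hB0⟩ := denA1 (by linarith) h1
    rw [key 0 1 hA hA0 hB hB0]; push_cast; ring
  · rintro ⟨h1, h2, h3, h4⟩
    obtain ⟨hA, hA0⟩ := numA1 h3 h4
    obtain ⟨hB, hB0⟩ := denA0 h4 h2
    rw [key 1 0 hA hA0 hB hB0]; push_cast; ring
  · rintro ⟨h1, h2, h3, h4⟩
    obtain ⟨hA, hA0⟩ := numA1 h3 h4
    obtain ⟨hB, hB0⟩ := denA1 h4 h1
    rw [key 1 1 hA hA0 hB hB0]; push_cast; ring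
  · rintro ⟨h1, h2, h3, h4⟩
    obtain ⟨hA, hA0⟩ := numB0 h3
    obtain ⟨hB, hB0⟩ := denB0 h3
    rw [key 0 0 hA hA0 hB hB0]; push_cast; ring
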